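/- Let G be a group acting faithfully on the right by homeomorphisms on a Hausdorff topological space X without isolated points, and suppose R_G(V) ≠ {1} for every nonempty open V ⊆ X. Then for every nonempty open U ⊆ X the rigid stabilizer R_G(U) has the infinite conjugacy class property: for every γ ∈ R_G(U) with γ ≠ 1, the set of conjugates {g⁻¹γg : g ∈ R_G(U)} is infinite. -/
import Mathlib


open MulOpposite

/-- Pointwise stabilizer of a set `A ⊆ X` for a right action of `G` on `X`:
`{g ∈ G : x·g = x for all x ∈ A}`. -/
def pointwiseStabilizer (G : Type*) {X : Type*} [Group G] [MulAction Gᵐᵒᵖ X] (A : Set X) :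
    Subgroup G where
  carrier := {g : G | ∀ x ∈ A, op g • x = x}
  one_mem' := by intro x _; simp
  mul_mem' := by
    intro g h hg hh x hx
    have h1 : op (g * h) • x = op h • (op g • x) := by
      rw [op_mul, mul_smul]
    rw [h1, hg x hx, hh x hx]
  inv_mem' := by
    intro g hg x hx
    have h1 : op g⁻¹ • (op g • x) = x := by
      rw [op_inv]; exact inv_smul_smul _ _
    rw [hg x hx] at h1
    exact h1

/-- Rigid stabilizer `R_G(U) = {g ∈ G : x·g = x for all x ∈ X \ U}`. -/
def rigidStabilizer (G : Type*) {X : Type*} [Group G] [MulAction Gᵐᵒᵖ X] (U : Set X) :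
    Subgroup G :=
  pointwiseStabilizer G Uᶜ

section Aux

variable {G X : Type*} [Group G] [TopologicalSpace X] [T2Space X] [MulAction Gᵐᵒᵖ X]

lemma mem_rigidStabilizer_iff' {U : Set X} {g : G} :
    g ∈ rigidStabilizer G U ↔ ∀ x ∉ U, op g • x = x := Iff.rfl

lemma rigidStabilizer_mono' {U V : Set X} (h : U ⊆ V) :
    rigidStabilizer G U ≤ rigidStabilizer G V := by
  intro g hg x hx
  exact hg x (fun hxU => hx (h hxU))

lemma exists_split' (hnoiso : ∀ x : X, ¬ IsOpen ({x} : Set X))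
    {V : Set X} (hV : IsOpen V) (hne : V.Nonempty) :
    ∃ W₁ W₂ : Set X, IsOpen W₁ ∧ IsOpen W₂ ∧ W₁.Nonempty ∧ W₂.Nonempty ∧
      W₁ ⊆ V ∧ W₂ ⊆ V ∧ Disjoint W₁ W₂ := by
  obtain ⟨x, hx⟩ := hne
  have hy : ∃ y ∈ V, y ≠ x := by
    by_contra h
    push_neg at h
    have : V = {x} := Set.eq_singleton_iff_unique_mem.mpr ⟨hx, h⟩
    exact hnoiso x (this ▸ hV)
  obtain ⟨y, hyV, hyx⟩ := hy
  obtain ⟨A, B, hA, hB, hxA, hyB, hAB⟩ := t2_separation hyx.symm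
  exact ⟨V ∩ A, V ∩ B, hV.inter hA, hV.inter hB, ⟨x, hx, hxA⟩, ⟨y, hyV, hyB⟩,
    Set.inter_subset_left, Set.inter_subset_left,
    hAB.mono Set.inter_subset_right Set.inter_subset_right⟩

lemma exists_inj_seq'
    (hfaith : ∀ g : G, (∀ x : X, op g • x = x) → g = 1)
    (hnoiso : ∀ x : X, ¬ IsOpen ({x} : Set X))
    (hnontriv : ∀ V : Set X, IsOpen V → V.Nonempty → rigidStabilizer G V ≠ ⊥)
    {V : Set X} (hV : IsOpen V) (hne : V.Nonempty) :
    ∃ t : ℕ → G, Function.Injective t ∧ ∀ n, t n ∈ rigidStabilizer G V := by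
  have step : ∀ W : {W : Set X // IsOpen W ∧ W.Nonempty},
      ∃ p : {W : Set X // IsOpen W ∧ W.Nonempty} × {W : Set X // IsOpen W ∧ W.Nonempty},
        p.1.1 ⊆ W.1 ∧ p.2.1 ⊆ W.1 ∧ Disjoint p.1.1 p.2.1 := by
    rintro ⟨W, hW, hWne⟩
    obtain ⟨W₁, W₂, h1, h2, n1, n2, s1, s2, d⟩ := exists_split' hnoiso hW hWne
    exact ⟨(⟨W₁, h1, n1⟩, ⟨W₂, h2, n2⟩), s1, s2, d⟩
  choose F hF1 hF2 hF3 using step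
  let R : ℕ → {W : Set X // IsOpen W ∧ W.Nonempty} :=
    fun n => Nat.rec ⟨V, hV, hne⟩ (fun _ W => (F W).2) n
  let P : ℕ → {W : Set X // IsOpen W ∧ W.Nonempty} := fun n => (F (R n)).1
  have hRsucc : ∀ n, (R (n + 1)).1 ⊆ (R n).1 := fun n => hF2 (R n)
  have hRle : ∀ n m, n ≤ m → (R m).1 ⊆ (R n).1 := by
    intro n m h
    induction h with
    | refl => exact le_refl _
    | step h ih => exact (hRsucc _).trans ih
  have hPR : ∀ n, (P n).1 ⊆ (R n).1 := fun n => hF1 (R n)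
  have hPV : ∀ n, (P n).1 ⊆ V := fun n => (hPR n).trans (hRle 0 n (Nat.zero_le n))
  have hPdisj : ∀ n m, n < m → Disjoint (P n).1 (P m).1 := by
    intro n m h
    exact (hF3 (R n)).mono le_rfl ((hPR m).trans (hRle (n + 1) m h))
  -- pick nontrivial elements
  have hsel : ∀ n : ℕ, ∃ g : G, g ∈ rigidStabilizer G (P n).1 ∧ g ≠ 1 := by
    intro n
    have := hnontriv (P n).1 (P n).2.1 (P n).2.2
    rcases Subgroup.ne_bot_iff_exists_ne_one.mp this with ⟨⟨g, hg⟩, hg1⟩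
    exact ⟨g, hg, fun h => hg1 (by simp [Subtype.ext_iff, h])⟩
  choose t ht ht1 using hsel
  refine ⟨t, ?_, fun n => rigidStabilizer_mono' (hPV n) (ht n)⟩
  intro n m hnm
  by_contra hne'
  -- wlog n < m
  have key : ∀ a b : ℕ, a < b → t a = t b → False := by
    intro a b hab heq
    apply ht1 a
    apply hfaith
    intro x
    by_cases hxa : x ∈ (P a).1
    · have hxb : x ∉ (P b).1 := fun hxb =>
        (hPdisj a b hab).ne_of_mem hxa hxb rfl
      rw [heq]
      exact ht b x hxb
    · exact ht a x hxa
  rcases lt_or_gt_of_ne hne' with h | h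
  · exact key n m h hnm
  · exact key m n h hnm.symm

end Aux

/-- If a group `G` acts faithfully by homeomorphisms on a Hausdorff space `X` without
isolated points (the right action is encoded as a left action of `Gᵐᵒᵖ`, so
`x·g = op g • x`), and every rigid stabilizer of a nonempty open set is nontrivial,
then every rigid stabilizer `R_G(U)` of a nonempty open `U` is ICC: every `γ ≠ 1` in
`R_G(U)` has infinitely many `R_G(U)`-conjugates. -/
theorem rigidStabilizer_icc
    {G X : Type*} [Group G] [TopologicalSpace X] [T2Space X] [MulAction Gᵐᵒᵖ X]
    (hcont : ∀ g : G, Continuous fun x : X => op g • x)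
    (hfaith : ∀ g : G, (∀ x : X, op g • x = x) → g = 1)
    (hnoiso : ∀ x : X, ¬ IsOpen ({x} : Set X))
    (hnontriv : ∀ V : Set X, IsOpen V → V.Nonempty → rigidStabilizer G V ≠ ⊥) :
    ∀ U : Set X, IsOpen U → U.Nonempty →
      ∀ γ ∈ rigidStabilizer G U, γ ≠ 1 →
        {c : G | ∃ g ∈ rigidStabilizer G U, c = g⁻¹ * γ * g}.Infinite := by
  intro U hU hUne γ hγ hγ1
  -- γ moves some point, necessarily in U
  have hmove : ∃ x : X, op γ • x ≠ x := by
    by_contra h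
    push_neg at h
    exact hγ1 (hfaith γ h)
  obtain ⟨x, hx⟩ := hmove
  have hxU : x ∈ U := by
    by_contra hxU
    exact hx (hγ x hxU)
  obtain ⟨A, B, hA, hB, hxA, hγxB, hAB⟩ := t2_separation (Ne.symm hx)
  set V : Set X := (U ∩ A) ∩ ((fun y => op γ • y) ⁻¹' B) with hVdef
  have hVopen : IsOpen V := ((hU.inter hA).inter (hB.preimage (hcont γ)))
  have hVne : V.Nonempty := ⟨x, ⟨hxU, hxA⟩, hγxB⟩
  have hVU : V ⊆ U := fun y hy => hy.1.1
  have hVmove : ∀ y ∈ V, op γ • y ∉ V := by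
    intro y hy hyγ
    exact hAB.ne_of_mem hyγ.1.2 hy.2 rfl
  obtain ⟨t, htinj, htmem⟩ := exists_inj_seq' hfaith hnoiso hnontriv hVopen hVne
  refine Set.infinite_of_injective_forall_mem
    (f := fun n : ℕ => (t n)⁻¹ * γ * (t n)) ?_ ?_
  · -- injectivity of n ↦ (t n)⁻¹ * γ * t n
    intro n m h
    apply htinj
    -- from equal conjugates, s := t n * (t m)⁻¹ commutes with γ and lies in R(V)
    set g := t n with hg
    set hh := t m with hhdef
    have hs : g * hh⁻¹ ∈ rigidStabilizer G V :=
      (rigidStabilizer G V).mul_mem (htmem n) ((rigidStabilizer G V).inv_mem (htmem m))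
    set s := g * hh⁻¹ with hsdef
    have hcomm : γ * s = s * γ := by
      have h' : g⁻¹ * γ * g = hh⁻¹ * γ * hh := h
      have : γ * (g * hh⁻¹) = g * (g⁻¹ * γ * g) * hh⁻¹ := by group
      rw [h'] at this
      calc γ * s = γ * (g * hh⁻¹) := rfl
        _ = g * (hh⁻¹ * γ * hh) * hh⁻¹ := this
        _ = s * γ := by rw [hsdef]; group
    have hs1 : s = 1 := by
      apply hfaith
      intro y
      by_cases hyV : y ∈ V
      · -- op (γ * s) • y = op (s * γ) • y
        have e1 : op (γ * s) • y = op s • (op γ • y) := by rw [op_mul, mul_smul]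
        have e2 : op (s * γ) • y = op γ • (op s • y) := by rw [op_mul, mul_smul]
        have e3 : op s • (op γ • y) = op γ • y := hs _ (hVmove y hyV)
        have : op γ • (op s • y) = op γ • y := by
          rw [← e2, ← hcomm, e1, e3]
        exact smul_left_cancel _ this
      · exact hs y hyV
    have : g = hh := mul_inv_eq_one.mp hs1
    exact this
  · intro n
    exact ⟨t n, rigidStabilizer_mono' hVU (htmem n), rfl⟩
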